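/- Fix Ω, C skew-symmetric r×r matrices with ΩC ≠ CΩ. Define F : ℝ^r × ℝ^r → ℝ⁶ by F(x,y) = (‖x‖², ‖y‖², x·y, x₁, x·Ωy, x·Cy). At every point (x,y) with ‖x‖ = ‖y‖ = 1, x₁ = 0, y₁ ≠ 0, x·y = 0, x·Ωy = x·Cy = 0, and y·(ΩC - CΩ)x ≠ 0, the differential of F has rank 6. -/

import Mathlib

open Matrix


lemma dot_self_nonneg {n : ℕ} (v : Fin n → ℝ) : 0 ≤ v ⬝ᵥ v :=
  Finset.sum_nonneg fun i _ => mul_self_nonneg (v i)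

lemma dot_self_eq_zero {n : ℕ} {v : Fin n → ℝ} (h : v ⬝ᵥ v = 0) : v = 0 := by
  funext i
  have := Finset.sum_eq_zero_iff_of_nonneg (fun j (_ : j ∈ Finset.univ) =>
    mul_self_nonneg (v j)) |>.1 h i (Finset.mem_univ i)
  simpa using mul_self_eq_zero.1 this

lemma key_ineq {n : ℕ} (p q s t : Fin n → ℝ)
    (hE : s ⬝ᵥ q - p ⬝ᵥ t ≠ 0) :
    (p ⬝ᵥ s + t ⬝ᵥ q)^2 < (p ⬝ᵥ p + q ⬝ᵥ q) * (s ⬝ᵥ s + t ⬝ᵥ t) := by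
  have hA : 0 < p ⬝ᵥ p + q ⬝ᵥ q := by
    rcases lt_or_eq_of_le (add_nonneg (dot_self_nonneg p) (dot_self_nonneg q)) with h | h
    · exact h
    · exfalso
      have hp : p ⬝ᵥ p = 0 := by nlinarith [dot_self_nonneg q, dot_self_nonneg p]
      have hq : q ⬝ᵥ q = 0 := by nlinarith [dot_self_nonneg q, dot_self_nonneg p]
      rw [dot_self_eq_zero hp, dot_self_eq_zero hq] at hE
      simp at hE
  set A := p ⬝ᵥ p + q ⬝ᵥ q with hAdef
  set D := s ⬝ᵥ s + t ⬝ᵥ t with hDdef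
  set B := p ⬝ᵥ s + t ⬝ᵥ q with hBdef
  set E := s ⬝ᵥ q - p ⬝ᵥ t with hEdef
  have h0 : 0 ≤ (A • s - B • p - E • q) ⬝ᵥ (A • s - B • p - E • q)
      + (A • t - B • q + E • p) ⬝ᵥ (A • t - B • q + E • p) :=
    add_nonneg (dot_self_nonneg _) (dot_self_nonneg _)
  have hexp : (A • s - B • p - E • q) ⬝ᵥ (A • s - B • p - E • q)
      + (A • t - B • q + E • p) ⬝ᵥ (A • t - B • q + E • p)
      = A * (A * D - B^2 - E^2) := by
    simp only [sub_dotProduct, dotProduct_sub, add_dotProduct,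
      dotProduct_add, smul_dotProduct, dotProduct_smul, smul_eq_mul,
      hAdef, hDdef, hBdef, hEdef]
    simp only [dotProduct_comm s p, dotProduct_comm q p, dotProduct_comm s q,
      dotProduct_comm t p, dotProduct_comm t q, dotProduct_comm t s]
    ring
  have hEsq : 0 < E^2 := by positivity
  have h1 : 0 ≤ A * (A * D - B^2 - E^2) := hexp ▸ h0
  have h2 : 0 ≤ A * D - B^2 - E^2 := nonneg_of_mul_nonneg_right h1 hA
  linarith

noncomputable def dotD {E : Type*} [NormedAddCommGroup E] [NormedSpace ℝ E]
    [FiniteDimensional ℝ E] {n : ℕ} (g h : E →L[ℝ] (Fin n → ℝ)) (p : E) : E →L[ℝ] ℝ :=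
  LinearMap.toContinuousLinearMap
    { toFun := fun u => g u ⬝ᵥ h p + g p ⬝ᵥ h u,
      map_add' := by
        intro a b
        simp only [map_add, add_dotProduct, dotProduct_add]
        ring
      map_smul' := by
        intro m a
        simp only [_root_.map_smul, smul_dotProduct, dotProduct_smul, smul_eq_mul,
          RingHom.id_apply]
        ring }

@[simp] lemma dotD_apply {E : Type*} [NormedAddCommGroup E] [NormedSpace ℝ E]
    [FiniteDimensional ℝ E] {n : ℕ} (g h : E →L[ℝ] (Fin n → ℝ)) (p u : E) :
    dotD g h p u = g u ⬝ᵥ h p + g p ⬝ᵥ h u := rfl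

lemma dot_hasFDerivAt {E : Type*} [NormedAddCommGroup E] [NormedSpace ℝ E]
    [FiniteDimensional ℝ E] {n : ℕ}
    (g h : E →L[ℝ] (Fin n → ℝ)) (p : E) :
    HasFDerivAt (fun q => g q ⬝ᵥ h q) (dotD g h p) p := by
  have hcomp : ∀ i : Fin n,
      HasFDerivAt (fun q => g q i * h q i)
        (g p i • ((ContinuousLinearMap.proj i).comp h)
          + h p i • ((ContinuousLinearMap.proj i).comp g)) p := fun i =>
    (((ContinuousLinearMap.proj i).comp g).hasFDerivAt).mul
      (((ContinuousLinearMap.proj i).comp h).hasFDerivAt)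
  have hsum := HasFDerivAt.fun_sum (fun i (_ : i ∈ Finset.univ) => hcomp i)
  have heq : (∑ i : Fin n, (g p i • ((ContinuousLinearMap.proj i).comp h)
          + h p i • ((ContinuousLinearMap.proj i).comp g))) = dotD g h p := by
    ext u
    simp [dotProduct, dotD, Finset.sum_add_distrib, mul_comm, add_comm]
  rw [← heq]
  exact hsum

theorem stmt17 (r : ℕ) (hr : 0 < r) (Ω C : Matrix (Fin r) (Fin r) ℝ)
    (hΩ : Ωᵀ = -Ω) (hC : Cᵀ = -C) (hnc : Ω * C ≠ C * Ω)
    (x y : Fin r → ℝ)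
    (hx : x ⬝ᵥ x = 1) (hy : y ⬝ᵥ y = 1) (hxy : x ⬝ᵥ y = 0)
    (hx1 : x ⟨0, hr⟩ = 0) (hy1 : y ⟨0, hr⟩ ≠ 0)
    (hxΩy : x ⬝ᵥ (Ω *ᵥ y) = 0) (hxCy : x ⬝ᵥ (C *ᵥ y) = 0)
    (hne : y ⬝ᵥ ((Ω * C - C * Ω) *ᵥ x) ≠ 0) :
    LinearMap.rank
      (ContinuousLinearMap.toLinearMap
        (fderiv ℝ (fun p : (Fin r → ℝ) × (Fin r → ℝ) =>
          ![p.1 ⬝ᵥ p.1, p.2 ⬝ᵥ p.2, p.1 ⬝ᵥ p.2, p.1 ⟨0, hr⟩,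
            p.1 ⬝ᵥ (Ω *ᵥ p.2), p.1 ⬝ᵥ (C *ᵥ p.2)]) (x, y))) = 6 := by
  classical
  let fstL : ((Fin r → ℝ) × (Fin r → ℝ)) →L[ℝ] (Fin r → ℝ) := ContinuousLinearMap.fst ℝ (Fin r → ℝ) (Fin r → ℝ)
  let sndL : ((Fin r → ℝ) × (Fin r → ℝ)) →L[ℝ] (Fin r → ℝ) := ContinuousLinearMap.snd ℝ (Fin r → ℝ) (Fin r → ℝ)
  let mΩ : (Fin r → ℝ) →L[ℝ] (Fin r → ℝ) := LinearMap.toContinuousLinearMap Ω.mulVecLin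
  let mC : (Fin r → ℝ) →L[ℝ] (Fin r → ℝ) := LinearMap.toContinuousLinearMap C.mulVecLin
  let D : Fin 6 → (((Fin r → ℝ) × (Fin r → ℝ)) →L[ℝ] ℝ) :=
    ![dotD fstL fstL (x, y), dotD sndL sndL (x, y), dotD fstL sndL (x, y),
      (ContinuousLinearMap.proj (⟨0, hr⟩ : Fin r)).comp fstL,
      dotD fstL (mΩ.comp sndL) (x, y), dotD fstL (mC.comp sndL) (x, y)]
  let L' : ((Fin r → ℝ) × (Fin r → ℝ)) →L[ℝ] (Fin 6 → ℝ) := ContinuousLinearMap.pi D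
  have hF : HasFDerivAt (fun p : (Fin r → ℝ) × (Fin r → ℝ) =>
      ![p.1 ⬝ᵥ p.1, p.2 ⬝ᵥ p.2, p.1 ⬝ᵥ p.2, p.1 ⟨0, hr⟩,
        p.1 ⬝ᵥ (Ω *ᵥ p.2), p.1 ⬝ᵥ (C *ᵥ p.2)]) L' (x, y) := by
    apply hasFDerivAt_pi''
    intro i
    rw [show (ContinuousLinearMap.proj i).comp L' = D i from ContinuousLinearMap.proj_pi D i]
    fin_cases i
    · exact dot_hasFDerivAt fstL fstL (x, y)
    · exact dot_hasFDerivAt sndL sndL (x, y)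
    · exact dot_hasFDerivAt fstL sndL (x, y)
    · exact ((ContinuousLinearMap.proj (⟨0, hr⟩ : Fin r)).comp fstL).hasFDerivAt
    · exact dot_hasFDerivAt fstL (mΩ.comp sndL) (x, y)
    · exact dot_hasFDerivAt fstL (mC.comp sndL) (x, y)
  rw [hF.fderiv]
  have hsurj : Function.Surjective L' := by
    have skewΩ : ∀ u v : Fin r → ℝ, u ⬝ᵥ (Ω *ᵥ v) = -((Ω *ᵥ u) ⬝ᵥ v) := by
      intro u v
      rw [Matrix.dotProduct_mulVec, ← Matrix.mulVec_transpose, hΩ, Matrix.neg_mulVec,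
        neg_dotProduct]
    have skewC : ∀ u v : Fin r → ℝ, u ⬝ᵥ (C *ᵥ v) = -((C *ᵥ u) ⬝ᵥ v) := by
      intro u v
      rw [Matrix.dotProduct_mulVec, ← Matrix.mulVec_transpose, hC, Matrix.neg_mulVec,
        neg_dotProduct]
    have hE0 : (C *ᵥ y) ⬝ᵥ (Ω *ᵥ x) - (Ω *ᵥ y) ⬝ᵥ (C *ᵥ x) ≠ 0 := by
      intro h
      apply hne
      rw [Matrix.sub_mulVec, dotProduct_sub, ← Matrix.mulVec_mulVec,
        ← Matrix.mulVec_mulVec, skewΩ y (C *ᵥ x), skewC y (Ω *ᵥ x)]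
      linarith
    have hkey := key_ineq (Ω *ᵥ y) (Ω *ᵥ x) (C *ᵥ y) (C *ᵥ x) hE0
    have hΔ : ((Ω *ᵥ y) ⬝ᵥ (Ω *ᵥ y) + (Ω *ᵥ x) ⬝ᵥ (Ω *ᵥ x))
        * ((C *ᵥ y) ⬝ᵥ (C *ᵥ y) + (C *ᵥ x) ⬝ᵥ (C *ᵥ x))
        - ((Ω *ᵥ y) ⬝ᵥ (C *ᵥ y) + (C *ᵥ x) ⬝ᵥ (Ω *ᵥ x))^2 ≠ 0 := by nlinarith [hkey]
    have f_yx : y ⬝ᵥ x = 0 := by rw [dotProduct_comm]; exact hxy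
    have f_Ωyx : (Ω *ᵥ y) ⬝ᵥ x = 0 := by rw [dotProduct_comm]; exact hxΩy
    have f_Cyx : (C *ᵥ y) ⬝ᵥ x = 0 := by rw [dotProduct_comm]; exact hxCy
    have f_yΩy : y ⬝ᵥ (Ω *ᵥ y) = 0 := by
      have h := skewΩ y y
      rw [dotProduct_comm (Ω *ᵥ y) y] at h
      linarith
    have f_yCy : y ⬝ᵥ (C *ᵥ y) = 0 := by
      have h := skewC y y
      rw [dotProduct_comm (C *ᵥ y) y] at h
      linarith
    have f_Ωyy : (Ω *ᵥ y) ⬝ᵥ y = 0 := by rw [dotProduct_comm]; exact f_yΩy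
    have f_Cyy : (C *ᵥ y) ⬝ᵥ y = 0 := by rw [dotProduct_comm]; exact f_yCy
    have f_xΩx : x ⬝ᵥ (Ω *ᵥ x) = 0 := by
      have h := skewΩ x x
      rw [dotProduct_comm (Ω *ᵥ x) x] at h
      linarith
    have f_xCx : x ⬝ᵥ (C *ᵥ x) = 0 := by
      have h := skewC x x
      rw [dotProduct_comm (C *ᵥ x) x] at h
      linarith
    have f_xΩΩx : x ⬝ᵥ (Ω *ᵥ (Ω *ᵥ x)) = -((Ω *ᵥ x) ⬝ᵥ (Ω *ᵥ x)) := skewΩ x (Ω *ᵥ x)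
    have f_xΩCx : x ⬝ᵥ (Ω *ᵥ (C *ᵥ x)) = -((C *ᵥ x) ⬝ᵥ (Ω *ᵥ x)) := by
      rw [skewΩ x (C *ᵥ x), dotProduct_comm]
    have f_xCΩx : x ⬝ᵥ (C *ᵥ (Ω *ᵥ x)) = -((C *ᵥ x) ⬝ᵥ (Ω *ᵥ x)) := skewC x (Ω *ᵥ x)
    have f_xCCx : x ⬝ᵥ (C *ᵥ (C *ᵥ x)) = -((C *ᵥ x) ⬝ᵥ (C *ᵥ x)) := skewC x (C *ᵥ x)
    have f_CyΩy : (C *ᵥ y) ⬝ᵥ (Ω *ᵥ y) = (Ω *ᵥ y) ⬝ᵥ (C *ᵥ y) := dotProduct_comm _ _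
    have f_yΩx : y ⬝ᵥ (Ω *ᵥ x) = 0 := by rw [skewΩ]; rw [dotProduct_comm]; simp [hxΩy]
    have f_Ωxy : (Ω *ᵥ x) ⬝ᵥ y = 0 := by rw [dotProduct_comm]; exact f_yΩx
    have f_yCx : y ⬝ᵥ (C *ᵥ x) = 0 := by rw [skewC]; rw [dotProduct_comm]; simp [hxCy]
    have f_Cxy : (C *ᵥ x) ⬝ᵥ y = 0 := by rw [dotProduct_comm]; exact f_yCx
    have f2_ΩΩ : x ⬝ᵥ ((Ω * Ω) *ᵥ x) = -((Ω *ᵥ x) ⬝ᵥ (Ω *ᵥ x)) := by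
      rw [← Matrix.mulVec_mulVec]; exact f_xΩΩx
    have f2_ΩC : x ⬝ᵥ ((Ω * C) *ᵥ x) = -((C *ᵥ x) ⬝ᵥ (Ω *ᵥ x)) := by
      rw [← Matrix.mulVec_mulVec]; exact f_xΩCx
    have f2_CΩ : x ⬝ᵥ ((C * Ω) *ᵥ x) = -((C *ᵥ x) ⬝ᵥ (Ω *ᵥ x)) := by
      rw [← Matrix.mulVec_mulVec]; exact f_xCΩx
    have f2_CC : x ⬝ᵥ ((C * C) *ᵥ x) = -((C *ᵥ x) ⬝ᵥ (C *ᵥ x)) := by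
      rw [← Matrix.mulVec_mulVec]; exact f_xCCx
    intro t
    set Δ := ((Ω *ᵥ y) ⬝ᵥ (Ω *ᵥ y) + (Ω *ᵥ x) ⬝ᵥ (Ω *ᵥ x))
        * ((C *ᵥ y) ⬝ᵥ (C *ᵥ y) + (C *ᵥ x) ⬝ᵥ (C *ᵥ x))
        - ((Ω *ᵥ y) ⬝ᵥ (C *ᵥ y) + (C *ᵥ x) ⬝ᵥ (Ω *ᵥ x))^2 with hΔdef
    set c4 := (((C *ᵥ y) ⬝ᵥ (C *ᵥ y) + (C *ᵥ x) ⬝ᵥ (C *ᵥ x)) * t 4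
        - ((Ω *ᵥ y) ⬝ᵥ (C *ᵥ y) + (C *ᵥ x) ⬝ᵥ (Ω *ᵥ x)) * t 5) / Δ with hc4
    set c5 := (((Ω *ᵥ y) ⬝ᵥ (Ω *ᵥ y) + (Ω *ᵥ x) ⬝ᵥ (Ω *ᵥ x)) * t 5
        - ((Ω *ᵥ y) ⬝ᵥ (C *ᵥ y) + (C *ᵥ x) ⬝ᵥ (Ω *ᵥ x)) * t 4) / Δ with hc5
    set c3 := (t 3 - (Ω *ᵥ y) ⟨0, hr⟩ * c4 - (C *ᵥ y) ⟨0, hr⟩ * c5) / (y ⟨0, hr⟩) with hc3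
    refine ⟨((t 0 / 2) • x + c3 • y + c4 • (Ω *ᵥ y) + c5 • (C *ᵥ y),
             (t 1 / 2) • y + (t 2 - c3) • x - c4 • (Ω *ᵥ x) - c5 • (C *ᵥ x)), ?_⟩
    funext j
    have hL'app : ∀ (w : (Fin r → ℝ) × (Fin r → ℝ)) (j : Fin 6), L' w j = D j w := fun w j => rfl
    rw [hL'app]
    fin_cases j
    · show dotD fstL fstL (x, y) _ = _
      simp [Matrix.mulVec_add, Matrix.mulVec_sub, Matrix.mulVec_smul,
          add_dotProduct, sub_dotProduct, smul_dotProduct,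
          dotProduct_add, dotProduct_sub, dotProduct_smul, smul_eq_mul,
          fstL, sndL, mΩ, mC, hx, hy, hxy, f_yx, hxΩy, hxCy, f_Ωyx, f_Cyx, f_yΩy, f_Ωyy,
          f_yCy, f_Cyy, f_xΩx, f_xCx, f_xΩΩx, f_xΩCx, f_xCΩx, f_xCCx, f_CyΩy, hx1, f_yΩx, f_Ωxy, f_yCx, f_Cxy, f2_ΩΩ, f2_ΩC, f2_CΩ, f2_CC]
    · show dotD sndL sndL (x, y) _ = _
      simp [Matrix.mulVec_add, Matrix.mulVec_sub, Matrix.mulVec_smul,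
          add_dotProduct, sub_dotProduct, smul_dotProduct,
          dotProduct_add, dotProduct_sub, dotProduct_smul, smul_eq_mul,
          fstL, sndL, mΩ, mC, hx, hy, hxy, f_yx, hxΩy, hxCy, f_Ωyx, f_Cyx, f_yΩy, f_Ωyy,
          f_yCy, f_Cyy, f_xΩx, f_xCx, f_xΩΩx, f_xΩCx, f_xCΩx, f_xCCx, f_CyΩy, hx1, f_yΩx, f_Ωxy, f_yCx, f_Cxy, f2_ΩΩ, f2_ΩC, f2_CΩ, f2_CC]
    · show dotD fstL sndL (x, y) _ = _
      simp [Matrix.mulVec_add, Matrix.mulVec_sub, Matrix.mulVec_smul,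
          add_dotProduct, sub_dotProduct, smul_dotProduct,
          dotProduct_add, dotProduct_sub, dotProduct_smul, smul_eq_mul,
          fstL, sndL, mΩ, mC, hx, hy, hxy, f_yx, hxΩy, hxCy, f_Ωyx, f_Cyx, f_yΩy, f_Ωyy,
          f_yCy, f_Cyy, f_xΩx, f_xCx, f_xΩΩx, f_xΩCx, f_xCΩx, f_xCCx, f_CyΩy, hx1, f_yΩx, f_Ωxy, f_yCx, f_Cxy, f2_ΩΩ, f2_ΩC, f2_CΩ, f2_CC]
    · show ((ContinuousLinearMap.proj (⟨0, hr⟩ : Fin r)).comp fstL) _ = _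
      simp [Matrix.mulVec_add, Matrix.mulVec_sub, Matrix.mulVec_smul,
          add_dotProduct, sub_dotProduct, smul_dotProduct,
          dotProduct_add, dotProduct_sub, dotProduct_smul, smul_eq_mul,
          fstL, sndL, mΩ, mC, hx, hy, hxy, f_yx, hxΩy, hxCy, f_Ωyx, f_Cyx, f_yΩy, f_Ωyy,
          f_yCy, f_Cyy, f_xΩx, f_xCx, f_xΩΩx, f_xΩCx, f_xCΩx, f_xCCx, f_CyΩy, hx1, f_yΩx, f_Ωxy, f_yCx, f_Cxy, f2_ΩΩ, f2_ΩC, f2_CΩ, f2_CC]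
      rw [hc3]
      field_simp
      ring
    · show dotD fstL (mΩ.comp sndL) (x, y) _ = _
      simp [Matrix.mulVec_add, Matrix.mulVec_sub, Matrix.mulVec_smul,
          add_dotProduct, sub_dotProduct, smul_dotProduct,
          dotProduct_add, dotProduct_sub, dotProduct_smul, smul_eq_mul,
          fstL, sndL, mΩ, mC, hx, hy, hxy, f_yx, hxΩy, hxCy, f_Ωyx, f_Cyx, f_yΩy, f_Ωyy,
          f_yCy, f_Cyy, f_xΩx, f_xCx, f_xΩΩx, f_xΩCx, f_xCΩx, f_xCCx, f_CyΩy, hx1, f_yΩx, f_Ωxy, f_yCx, f_Cxy, f2_ΩΩ, f2_ΩC, f2_CΩ, f2_CC]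
      rw [hc4, hc5]
      field_simp
      rw [hΔdef]
      ring
    · show dotD fstL (mC.comp sndL) (x, y) _ = _
      simp [Matrix.mulVec_add, Matrix.mulVec_sub, Matrix.mulVec_smul,
          add_dotProduct, sub_dotProduct, smul_dotProduct,
          dotProduct_add, dotProduct_sub, dotProduct_smul, smul_eq_mul,
          fstL, sndL, mΩ, mC, hx, hy, hxy, f_yx, hxΩy, hxCy, f_Ωyx, f_Cyx, f_yΩy, f_Ωyy,
          f_yCy, f_Cyy, f_xΩx, f_xCx, f_xΩΩx, f_xΩCx, f_xCΩx, f_xCCx, f_CyΩy, hx1, f_yΩx, f_Ωxy, f_yCx, f_Cxy, f2_ΩΩ, f2_ΩC, f2_CΩ, f2_CC]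
      rw [hc4, hc5]
      field_simp
      rw [hΔdef]
      ring
  have : LinearMap.range L'.toLinearMap = ⊤ := LinearMap.range_eq_top.mpr hsurj
  rw [LinearMap.rank, this]
  simpa using rank_fin_fun (R := ℝ) 6
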